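/- Fix an integer k ≥ 0 and let g_k : (0,∞) → (0,∞) be differentiable. Define h_k : (0,∞) → (0,∞) by the finite continued fraction h_k(x) = x + 1/(x + 2/(⋯ + k/g_k(x))); formally, b_k(x) = g_k(x), b_{j-1}(x) = x + j/b_j(x) for j = k, …, 1, and h_k(x) = b_0(x) (with h_0 = g_0). Let Δ_k(x) = φ(x)/h_k(x) − (1 − Φ(x)). Then for every x > 0, the sign of Δ_k'(x) equals (−1)^k times the sign of g_k(x)² − x·g_k(x) − k − g_k'(x). -/

import Mathlib

open MeasureTheory Real

/-- Standard Gaussian density. -/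
noncomputable def gaussPdf (x : ℝ) : ℝ := Real.exp (-x ^ 2 / 2) / Real.sqrt (2 * Real.pi)

/-- Standard Gaussian distribution function. -/
noncomputable def gaussCdf (x : ℝ) : ℝ := ∫ t in Set.Iic x, gaussPdf t

/-- Finite continued fraction `hcf k g x = x + 1/(x + 2/(⋯ + k/(g x)))`,
with `hcf 0 g = g`. -/
noncomputable def hcf : ℕ → (ℝ → ℝ) → ℝ → ℝ
  | 0, g => g
  | (k + 1), g => hcf k (fun x => x + ((k : ℝ) + 1) / g x)

lemma my_sign_pos_mul (c t : ℝ) (hc : 0 < c) : Real.sign (c * t) = Real.sign t := by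
  rcases lt_trichotomy t 0 with h | h | h
  · rw [Real.sign_of_neg h, Real.sign_of_neg (mul_neg_of_pos_of_neg hc h)]
  · simp [h]
  · rw [Real.sign_of_pos h, Real.sign_of_pos (mul_pos hc h)]

lemma gaussPdf_pos (x : ℝ) : 0 < gaussPdf x := by
  unfold gaussPdf
  positivity

lemma gaussPdf_eq : gaussPdf = fun t => Real.exp (-(1/2) * t ^ 2) / Real.sqrt (2 * Real.pi) := by
  funext t; unfold gaussPdf; ring_nf

lemma gaussPdf_integrable : Integrable gaussPdf := by
  rw [gaussPdf_eq]
  exact (integrable_exp_neg_mul_sq (by norm_num : (0:ℝ) < 1/2)).div_const _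

lemma gaussPdf_continuous : Continuous gaussPdf := by
  unfold gaussPdf
  fun_prop

lemma hasDerivAt_gaussPdf (x : ℝ) : HasDerivAt gaussPdf (-x * gaussPdf x) x := by
  have h1 : HasDerivAt (fun y : ℝ => -y ^ 2 / 2) (-(2 * x ^ 1) / 2) x :=
    ((hasDerivAt_pow 2 x).neg).div_const 2
  have h2 := ((h1.exp).div_const (Real.sqrt (2 * Real.pi)))
  convert h2 using 1
  all_goals try rfl
  unfold gaussPdf
  ring

lemma hasDerivAt_gaussCdf (x : ℝ) : HasDerivAt gaussCdf (gaussPdf x) x := by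
  have heq : gaussCdf = fun y => gaussCdf 0 + ∫ t in (0:ℝ)..y, gaussPdf t := by
    funext y
    have := intervalIntegral.integral_Iic_sub_Iic
      (gaussPdf_integrable.integrableOn (s := Set.Iic 0))
      (gaussPdf_integrable.integrableOn (s := Set.Iic y)) (μ := volume)
    unfold gaussCdf
    linarith [this]
  rw [heq]
  exact (hasDerivAt_const x (gaussCdf 0)).add
    (intervalIntegral.integral_hasDerivAt_right
      gaussPdf_integrable.intervalIntegrable
      gaussPdf_continuous.aestronglyMeasurable.stronglyMeasurableAtFilter
      gaussPdf_continuous.continuousAt) |>.congr_deriv (by ring)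

lemma key (k : ℕ) : ∀ (g g' : ℝ → ℝ), (∀ x > (0:ℝ), 0 < g x) →
    (∀ x > (0:ℝ), HasDerivAt g (g' x) x) → ∀ x > (0:ℝ),
    0 < hcf k g x ∧ ∃ d, HasDerivAt (hcf k g) d x ∧
      Real.sign ((hcf k g x) ^ 2 - x * hcf k g x - d) =
        (-1) ^ k * Real.sign ((g x) ^ 2 - x * g x - (k : ℝ) - g' x) := by
  induction k with
  | zero =>
    intro g g' hpos hderiv x hx
    exact ⟨hpos x hx, g' x, hderiv x hx, by norm_num [hcf]⟩
  | succ k ih =>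
    intro g g' hpos hderiv x hx
    set g₁ : ℝ → ℝ := fun x => x + ((k : ℝ) + 1) / g x with hg₁
    set g₁' : ℝ → ℝ := fun x => 1 + (0 * g x - ((k : ℝ) + 1) * g' x) / (g x) ^ 2 with hg₁'
    have hpos₁ : ∀ y > (0:ℝ), 0 < g₁ y := fun y hy =>
      add_pos hy (div_pos (by positivity) (hpos y hy))
    have hderiv₁ : ∀ y > (0:ℝ), HasDerivAt g₁ (g₁' y) y := fun y hy =>
      (hasDerivAt_id y).add (((hasDerivAt_const y ((k:ℝ)+1)).div (hderiv y hy)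
        (ne_of_gt (hpos y hy))))
    obtain ⟨hHpos, d, hd, hsign⟩ := ih g₁ g₁' hpos₁ hderiv₁ x hx
    have hcfeq : hcf (k+1) g = hcf k g₁ := rfl
    refine ⟨by rwa [hcfeq], d, by rwa [hcfeq], ?_⟩
    rw [hcfeq, hsign]
    have hgx := hpos x hx
    have halg : g₁ x ^ 2 - x * g₁ x - (k : ℝ) - g₁' x =
        (((k:ℝ)+1) / (g x) ^ 2) * (-((g x) ^ 2 - x * g x - ((k:ℝ)+1) - g' x)) := by
      simp only [hg₁, hg₁']
      field_simp
      ring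
    rw [halg, my_sign_pos_mul _ _ (by positivity), Real.sign_neg]
    push_cast
    ring

/-- Lemma 1: the sign of the derivative of the approximation error
Δ_k = φ/h_k - (1 - Φ) is (-1)^k times the sign of g_k² - x·g_k - k - g_k'. -/
theorem sign_deriv_approx_error (k : ℕ) (g g' : ℝ → ℝ)
    (hpos : ∀ x > (0 : ℝ), 0 < g x)
    (hderiv : ∀ x > (0 : ℝ), HasDerivAt g (g' x) x) :
    ∀ x > (0 : ℝ),
      Real.sign (deriv (fun y => gaussPdf y / hcf k g y - (1 - gaussCdf y)) x) =
        (-1) ^ k * Real.sign ((g x) ^ 2 - x * g x - (k : ℝ) - g' x) := by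
  intro x hx
  obtain ⟨hH, d, hd, hsign⟩ := key k g g' hpos hderiv x hx
  have hφ := hasDerivAt_gaussPdf x
  have hΦ := hasDerivAt_gaussCdf x
  have hdiv := (hφ.fun_div hd (ne_of_gt hH)).fun_sub ((hasDerivAt_const x (1:ℝ)).fun_sub hΦ)
  rw [hdiv.deriv]
  have hE : (-x * gaussPdf x * hcf k g x - gaussPdf x * d) / (hcf k g x) ^ 2
      - (0 - gaussPdf x) =
      (gaussPdf x / (hcf k g x) ^ 2) * ((hcf k g x) ^ 2 - x * hcf k g x - d) := by
    field_simp
    ring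
  rw [hE, my_sign_pos_mul _ _ (div_pos (gaussPdf_pos x) (pow_pos hH 2)), hsign]
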